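/- Let z be a permutation representing a k-multigraph with m = nd/k edges, every vertex of degree exactly d, at most L loops, and no multiple edges. Then the number of backward switchings applicable to z is at most B = binom(k,2)·n·(d)_2·m = ((k-1)/2)·n^2 d^2 (d-1), and at least B - binom(k,2)·(2kLdm + Ln(d)_2 + 2k^2 n d^4). -/

import Mathlib

/-- An edge (multiset of vertices) is a *loop* if some vertex has multiplicity ≥ 2. -/
def isLoopE {n : ℕ} (e : Multiset (Fin n)) : Prop := ∃ v, 2 ≤ e.count v

instance {n : ℕ} : DecidablePred (isLoopE (n := n)) := fun _ => by
  unfold isLoopE; infer_instance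

/-- An edge is a *simple loop* if exactly one vertex has multiplicity 2 and no vertex has
multiplicity greater than 2. -/
def isSimpleLoopE {n : ℕ} (e : Multiset (Fin n)) : Prop :=
  (Finset.univ.filter (fun v => e.count v = 2)).card = 1 ∧ ∀ v, e.count v ≤ 2

instance {n : ℕ} : DecidablePred (isSimpleLoopE (n := n)) := fun _ => by
  unfold isSimpleLoopE; infer_instance

/-- The multigraph obtained from `G` by a backward switching: the edges `e1', e2'`
(containing `v`) and `e3'` are replaced by the loop `f = e3' ∪ {v,v} - {y⋆,z⋆}` and the
edges `e1 = e1' ∪ {y⋆} - {v}`, `e2 = e2' ∪ {z⋆} - {v}`. -/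
def bwdResult {n : ℕ} (G : Multiset (Multiset (Fin n))) (e1' e2' e3' : Multiset (Fin n))
    (v ys zs : Fin n) : Multiset (Multiset (Fin n)) :=
  (v ::ₘ v ::ₘ (e3'.erase ys).erase zs) ::ₘ (ys ::ₘ e1'.erase v) ::ₘ (zs ::ₘ e2'.erase v) ::ₘ
    (((G.erase e1').erase e2').erase e3')

/-- A valid backward switching choice on `G`: a vertex `v`, distinct edges `e1' ≠ e2'`
both containing `v`, a further edge `e3'`, and distinct vertices `y⋆ ≠ z⋆` of `e3'`,
such that the resulting multigraph has no multiple edges and exactly one more loop. -/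
def bwdOk (n : ℕ) (G : Multiset (Multiset (Fin n))) (e1' e2' e3' : Multiset (Fin n))
    (v ys zs : Fin n) : Prop :=
  e1' ≠ e2' ∧ v ∈ e1' ∧ v ∈ e2' ∧ ys ∈ e3' ∧ zs ∈ e3' ∧ ys ≠ zs ∧
  (∀ e ∈ bwdResult G e1' e2' e3' v ys zs, (bwdResult G e1' e2' e3' v ys zs).count e = 1) ∧
  Multiset.card ((bwdResult G e1' e2' e3' v ys zs).filter isLoopE)
    = Multiset.card (G.filter isLoopE) + 1

instance (n : ℕ) (G : Multiset (Multiset (Fin n))) (e1' e2' e3' : Multiset (Fin n))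
    (v ys zs : Fin n) : Decidable (bwdOk n G e1' e2' e3' v ys zs) := by
  unfold bwdOk; infer_instance

/-- The set of all backward switching choices `(v, e1', e2', e3', y⋆, z⋆)` applicable to
`G`; here the pair of edges `(e1', e2')` and the pair of vertices `(y⋆, z⋆)` are both
ordered, so each backward switching (which uses an *unordered* vertex pair `{y⋆, z⋆}`)
is counted exactly twice. -/
def bwdSwitchSet (n : ℕ) (G : Multiset (Multiset (Fin n))) :
    Finset ((Multiset (Fin n) × Multiset (Fin n) × Multiset (Fin n)) ×
      (Fin n × Fin n × Fin n)) :=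
  ((G.toFinset ×ˢ G.toFinset ×ˢ G.toFinset) ×ˢ
      (Finset.univ : Finset (Fin n × Fin n × Fin n))).filter
    (fun t => bwdOk n G t.1.1 t.1.2.1 t.1.2.2 t.2.1 t.2.2.1 t.2.2.2)


namespace Stmt12H


lemma step {α β : Type*} [DecidableEq β] {s : Finset α} (f : α → β) {t : Finset β} {N c : ℕ}
    (h0 : t.card ≤ N)
    (h1 : ∀ a ∈ s, f a ∈ t)
    (h2 : ∀ b ∈ t, (s.filter (fun a => f a = b)).card ≤ c) :
    s.card ≤ N * c := by
  calc s.card = ∑ b ∈ t, (s.filter (fun a => f a = b)).card :=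
        Finset.card_eq_sum_card_fiberwise h1
    _ ≤ ∑ _b ∈ t, c := Finset.sum_le_sum h2
    _ = t.card * c := by rw [Finset.sum_const, smul_eq_mul]
    _ ≤ N * c := Nat.mul_le_mul_right c h0

lemma card_le_one' {α : Type*} {s : Finset α} (x : α) (h : ∀ a ∈ s, a = x) : s.card ≤ 1 :=
  Finset.card_le_one.mpr (fun a ha b hb => (h a ha).trans (h b hb).symm)

lemma sq_sub (r : ℕ) : r * r - r = r * (r - 1) := by
  rw [← Nat.pred_eq_sub_one, Nat.mul_pred]

lemma sq_mono {r d : ℕ} (h : r ≤ d) : r * r - r ≤ d * d - d := by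
  rw [sq_sub, sq_sub]; exact Nat.mul_le_mul h (Nat.sub_le_sub_right h 1)

lemma two_choose (k : ℕ) : 2 * k.choose 2 = k * k - k := by
  have hdvd : 2 ∣ k * (k - 1) := by
    rcases k with _ | k
    · simp
    · simpa [Nat.mul_comm, Nat.succ_sub_one] using (Nat.even_mul_succ_self k).two_dvd
  rw [Nat.choose_two_right, Nat.mul_div_cancel' hdvd, sq_sub]

lemma df2 (d : ℕ) : d.descFactorial 2 = d * d - d := by
  rw [sq_sub]
  simp [Nat.descFactorial, Nat.mul_comm]

lemma card_erase_ge {α : Type*} [DecidableEq α] (s : Multiset α) (a : α) :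
    Multiset.card s - 1 ≤ Multiset.card (s.erase a) := by
  by_cases h : a ∈ s
  · rw [Multiset.card_erase_of_mem h, Nat.pred_eq_sub_one]
  · rw [Multiset.erase_of_notMem h]; omega

lemma nat_key (r t d : ℕ) (h : r + t = d) : d * d - d ≤ (r * r - r) + 2 * d * t := by
  subst h
  rw [sq_sub, sq_sub]
  rcases t with _ | t
  · simp
  rcases r with _ | r
  · simp; nlinarith
  · have h1 : r + 1 + (t + 1) - 1 = r + t + 1 := by omega
    have h2 : r + 1 - 1 = r := rfl
    rw [h1, h2]
    nlinarith



lemma filter_erase_of_not_loop {n : ℕ} (s : Multiset (Multiset (Fin n)))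
    (x : Multiset (Fin n)) (hx : x ∈ s) (hlx : ¬ isLoopE x) :
    (s.erase x).filter isLoopE = s.filter isLoopE := by
  conv_rhs => rw [← Multiset.cons_erase hx]
  rw [Multiset.filter_cons, if_neg hlx, zero_add]

lemma good_ok {n : ℕ} (G : Multiset (Multiset (Fin n)))
    (hnomult : ∀ e ∈ G, G.count e = 1)
    (e1 e2 e3 : Multiset (Fin n)) (v ys zs : Fin n)
    (h1 : e1 ∈ G) (h2 : e2 ∈ G) (h3 : e3 ∈ G)
    (h12 : e1 ≠ e2) (hv1 : v ∈ e1) (hv2 : v ∈ e2)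
    (hy3 : ys ∈ e3) (hz3 : zs ∈ e3) (hyz : ys ≠ zs)
    (hl1 : ¬ isLoopE e1) (hl2 : ¬ isLoopE e2) (hl3 : ¬ isLoopE e3)
    (hdj : ∀ w ∈ e3, w ∉ e1 ∧ w ∉ e2)
    (hn1 : ys ::ₘ e1.erase v ∉ G) (hn2 : zs ::ₘ e2.erase v ∉ G)
    (hnf : v ::ₘ v ::ₘ (e3.erase ys).erase zs ∉ G) :
    bwdOk n G e1 e2 e3 v ys zs := by
  have hc1 : ∀ w, e1.count w ≤ 1 := fun w => by
    by_contra h; exact hl1 ⟨w, by omega⟩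
  have hc2 : ∀ w, e2.count w ≤ 1 := fun w => by
    by_contra h; exact hl2 ⟨w, by omega⟩
  have hv3 : v ∉ e3 := fun h => (hdj v h).1 hv1
  have hy1 : ys ∉ e1 := (hdj ys hy3).1
  have hy2 : ys ∉ e2 := (hdj ys hy3).2
  have hz2 : zs ∉ e2 := (hdj zs hz3).2
  have hyv : ys ≠ v := fun h => hy1 (h ▸ hv1)
  have hzv : zs ≠ v := fun h => hz2 (h ▸ hv2)
  set nf := v ::ₘ v ::ₘ (e3.erase ys).erase zs with hnfdef
  set a1 := ys ::ₘ e1.erase v with ha1def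
  set a2 := zs ::ₘ e2.erase v with ha2def
  set G3 := ((G.erase e1).erase e2).erase e3 with hG3def
  have hG3le : G3 ≤ G :=
    le_trans (Multiset.erase_le _ _) (le_trans (Multiset.erase_le _ _) (Multiset.erase_le _ _))
  have hG3cnt : ∀ x, G3.count x ≤ G.count x := fun x => Multiset.count_le_of_le x hG3le
  have hce1v : e1.count v = 1 := le_antisymm (hc1 v) (Multiset.one_le_count_iff_mem.2 hv1)
  have hce2v : e2.count v = 1 := le_antisymm (hc2 v) (Multiset.one_le_count_iff_mem.2 hv2)
  have he3v : e3.count v = 0 := Multiset.count_eq_zero.2 hv3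
  have he1y : e1.count ys = 0 := Multiset.count_eq_zero.2 hy1
  have he2y : e2.count ys = 0 := Multiset.count_eq_zero.2 hy2
  have he2z : e2.count zs = 0 := Multiset.count_eq_zero.2 hz2
  have herle : ((e3.erase ys).erase zs).count v ≤ e3.count v :=
    Multiset.count_le_of_le v (le_trans (Multiset.erase_le _ _) (Multiset.erase_le _ _))
  have cnfv : nf.count v = 2 := by
    rw [hnfdef, Multiset.count_cons_self, Multiset.count_cons_self]
    omega
  have ca1v : a1.count v = 0 := by
    rw [ha1def, Multiset.count_cons_of_ne (Ne.symm hyv), Multiset.count_erase_self]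
    omega
  have ca2v : a2.count v = 0 := by
    rw [ha2def, Multiset.count_cons_of_ne (Ne.symm hzv), Multiset.count_erase_self]
    omega
  have hley : (e1.erase v).count ys ≤ e1.count ys := Multiset.count_le_of_le ys (Multiset.erase_le _ _)
  have hley2 : (e2.erase v).count ys ≤ e2.count ys := Multiset.count_le_of_le ys (Multiset.erase_le _ _)
  have ca1y : a1.count ys = 1 := by
    rw [ha1def, Multiset.count_cons_self]
    omega
  have ca2y : a2.count ys = 0 := by
    rw [ha2def, Multiset.count_cons_of_ne hyz]
    omega
  have d1 : nf ≠ a1 := by intro h; rw [h, ca1v] at cnfv; omega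
  have d2 : nf ≠ a2 := by intro h; rw [h, ca2v] at cnfv; omega
  have d3 : a1 ≠ a2 := by intro h; rw [h, ca2y] at ca1y; omega
  have hne31 : e3 ≠ e1 := fun h => hy1 (h ▸ hy3)
  have hne32 : e3 ≠ e2 := fun h => hy2 (h ▸ hy3)
  have hnfG : G.count nf = 0 := Multiset.count_eq_zero.2 hnf
  have ha1G : G.count a1 = 0 := Multiset.count_eq_zero.2 hn1
  have ha2G : G.count a2 = 0 := Multiset.count_eq_zero.2 hn2
  have hR : bwdResult G e1 e2 e3 v ys zs = nf ::ₘ a1 ::ₘ a2 ::ₘ G3 := by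
    rw [hnfdef, ha1def, ha2def, hG3def]; rfl
  refine ⟨h12, hv1, hv2, hy3, hz3, hyz, ?_, ?_⟩
  · intro e he
    rw [hR] at he ⊢
    rw [Multiset.count_cons, Multiset.count_cons, Multiset.count_cons]
    rcases Multiset.mem_cons.1 he with rfl | he
    · have h0 : G3.count nf = 0 := by have := hG3cnt nf; omega
      rw [if_pos rfl, if_neg d1, if_neg d2, h0]
    rcases Multiset.mem_cons.1 he with rfl | he
    · have h0 : G3.count a1 = 0 := by have := hG3cnt a1; omega
      rw [if_neg (Ne.symm d1), if_pos rfl, if_neg d3, h0]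
    rcases Multiset.mem_cons.1 he with rfl | he
    · have h0 : G3.count a2 = 0 := by have := hG3cnt a2; omega
      rw [if_neg (Ne.symm d2), if_neg (Ne.symm d3), if_pos rfl, h0]
    · have heG : e ∈ G := Multiset.mem_of_le hG3le he
      have hcnt : G3.count e = 1 :=
        le_antisymm (le_trans (hG3cnt e) (le_of_eq (hnomult e heG)))
          (Multiset.one_le_count_iff_mem.2 he)
      have q1 : e ≠ nf := fun h => hnf (by rwa [h] at heG)
      have q2 : e ≠ a1 := fun h => hn1 (by rwa [h] at heG)
      have q3 : e ≠ a2 := fun h => hn2 (by rwa [h] at heG)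
      rw [if_neg q1, if_neg q2, if_neg q3, hcnt]
  · rw [hR]
    have lnf : isLoopE nf := ⟨v, le_of_eq cnfv.symm⟩
    have la1 : ¬ isLoopE a1 := by
      rintro ⟨w, hw⟩
      rw [ha1def, Multiset.count_cons] at hw
      have hle := Multiset.count_le_of_le w (Multiset.erase_le v e1)
      have := hc1 w
      split_ifs at hw with h
      · subst h; omega
      · omega
    have la2 : ¬ isLoopE a2 := by
      rintro ⟨w, hw⟩
      rw [ha2def, Multiset.count_cons] at hw
      have hle := Multiset.count_le_of_le w (Multiset.erase_le v e2)
      have := hc2 w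
      split_ifs at hw with h
      · subst h; omega
      · omega
    have hm2 : e2 ∈ G.erase e1 := (Multiset.mem_erase_of_ne (Ne.symm h12)).2 h2
    have hm3 : e3 ∈ (G.erase e1).erase e2 :=
      (Multiset.mem_erase_of_ne hne32).2 ((Multiset.mem_erase_of_ne hne31).2 h3)
    have hfe : G3.filter isLoopE = G.filter isLoopE := by
      rw [hG3def, filter_erase_of_not_loop _ e3 hm3 hl3,
        filter_erase_of_not_loop _ e2 hm2 hl2, filter_erase_of_not_loop _ e1 h1 hl1]
    rw [Multiset.filter_cons, Multiset.filter_cons, Multiset.filter_cons,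
      if_pos lnf, if_neg la1, if_neg la2, hfe]
    simp only [zero_add, Multiset.card_add, Multiset.card_singleton]
    omega


end Stmt12H

set_option maxHeartbeats 3000000 in
/-- Bounds on the number of backward switchings: if `G` is a `d`-regular `k`-multigraph
with `m = nd/k` edges, at most `L` loops, and no multiple edges, then the number of
backward switchings applicable to `G` (counted here with ordered vertex pairs, hence
twice each) is at most `2B` where `B = C(k,2)·n·(d)_2·m = ((k-1)/2)·n²d²(d-1)`, and at
least `2(B - C(k,2)(2kLdm + Ln(d)_2 + 2k²nd⁴))`. -/
theorem stmt12 (n d k m L : ℕ) (hk : 3 ≤ k) (hm : n * d = k * m)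
    (G : Multiset (Multiset (Fin n)))
    (hGcard : Multiset.card G = m)
    (hedge : ∀ e ∈ G, Multiset.card e = k)
    (hdeg : ∀ v : Fin n, (G.map (fun e => e.count v)).sum = d)
    (hnomult : ∀ e ∈ G, G.count e = 1)
    (hloops : Multiset.card (G.filter isLoopE) ≤ L) :
    (bwdSwitchSet n G).card ≤ 2 * (k.choose 2 * n * d.descFactorial 2 * m) ∧
    2 * (k.choose 2 * n * d.descFactorial 2 * m)
        - 2 * (k.choose 2 * (2 * k * L * d * m + L * n * d.descFactorial 2
            + 2 * k ^ 2 * n * d ^ 4))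
      ≤ (bwdSwitchSet n G).card ∧
    ((k.choose 2 * n * d.descFactorial 2 * m : ℕ) : ℝ)
      = ((k : ℝ) - 1) / 2 * (n : ℝ) ^ 2 * (d : ℝ) ^ 2 * ((d : ℝ) - 1) := by
  -- ===== setup =====
  have hnodup : G.Nodup := Multiset.nodup_iff_count_le_one.2 (fun e => by
    by_cases h : e ∈ G
    · exact le_of_eq (hnomult e h)
    · simp [Multiset.count_eq_zero.2 h])
  set F : Finset (Multiset (Fin n)) := G.toFinset with hFdef
  have hFval : F.val = G := by
    rw [hFdef, Multiset.toFinset_val, Multiset.dedup_eq_self.2 hnodup]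
  have hmemF : ∀ e : Multiset (Fin n), e ∈ F ↔ e ∈ G := fun e => Multiset.mem_toFinset
  have hFcard : F.card = m := by rw [hFdef, Multiset.toFinset_card_of_nodup hnodup, hGcard]
  have hsumF : ∀ g : Multiset (Fin n) → ℕ, ∑ e ∈ F, g e = (G.map g).sum := fun g => by
    rw [Finset.sum_eq_multiset_sum, hFval]
  set D : Fin n → Finset (Multiset (Fin n)) := fun w => F.filter (fun e => w ∈ e) with hDdef
  have hDmem : ∀ w e, e ∈ D w ↔ e ∈ F ∧ w ∈ e := fun w e => by
    rw [hDdef]; exact Finset.mem_filter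
  have hDcard : ∀ w, (D w).card ≤ d := by
    intro w
    have h1 : (D w).card ≤ ∑ e ∈ D w, e.count w := by
      rw [Finset.card_eq_sum_ones]
      refine Finset.sum_le_sum (fun e he => ?_)
      exact Multiset.one_le_count_iff_mem.2 ((hDmem w e).1 he).2
    have h2 : ∑ e ∈ D w, e.count w ≤ ∑ e ∈ F, e.count w := by
      rw [hDdef]; exact Finset.sum_le_sum_of_subset (Finset.filter_subset _ _)
    have h3 : ∑ e ∈ F, e.count w = d := by rw [hsumF]; exact hdeg w
    omega
  have htFk : ∀ e ∈ F, e.toFinset.card ≤ k := fun e he =>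
    le_trans (Multiset.toFinset_card_le e) (le_of_eq (hedge e ((hmemF e).1 he)))
  set U := (F ×ˢ F ×ˢ F) ×ˢ
      (Finset.univ : Finset (Fin n × Fin n × Fin n)) with hUdef
  have hS : bwdSwitchSet n G
      = U.filter (fun t => bwdOk n G t.1.1 t.1.2.1 t.1.2.2 t.2.1 t.2.2.1 t.2.2.2) := rfl
  have hUmem : ∀ a : (Multiset (Fin n) × Multiset (Fin n) × Multiset (Fin n)) ×
      (Fin n × Fin n × Fin n), a ∈ U → a.1.1 ∈ F ∧ a.1.2.1 ∈ F ∧ a.1.2.2 ∈ F := by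
    intro a ha
    rw [hUdef] at ha
    simp only [Finset.mem_product, Finset.mem_univ, and_true] at ha
    exact ha
  -- ===== upper bound =====
  have hub : (bwdSwitchSet n G).card ≤ n * ((d*d - d) * (m * ((k*k - k) * 1))) := by
    apply Stmt12H.step (fun a => a.2.1) (t := (Finset.univ : Finset (Fin n)))
      (by simp)
    · intro a _; exact Finset.mem_univ _
    intro v _
    apply Stmt12H.step (fun a => (a.1.1, a.1.2.1)) (t := (D v).offDiag)
      (by rw [Finset.offDiag_card]; exact Stmt12H.sq_mono (hDcard v))
    · intro a ha
      obtain ⟨haS, hav⟩ := Finset.mem_filter.1 ha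
      rw [hS] at haS
      obtain ⟨haU, hok⟩ := Finset.mem_filter.1 haS
      obtain ⟨hf1, hf2, hf3⟩ := hUmem a haU
      obtain ⟨h12, hv1, hv2, _, _, _, _, _⟩ := hok
      rw [Finset.mem_offDiag]
      exact ⟨(hDmem v a.1.1).2 ⟨hf1, hav ▸ hv1⟩, (hDmem v a.1.2.1).2 ⟨hf2, hav ▸ hv2⟩, h12⟩
    intro p _
    apply Stmt12H.step (fun a => a.1.2.2) (t := F) hFcard.le
    · intro a ha
      have haS := Finset.mem_of_mem_filter _ (Finset.mem_of_mem_filter _ ha)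
      rw [hS] at haS
      exact (hUmem a (Finset.mem_of_mem_filter _ haS)).2.2
    intro e3 he3
    apply Stmt12H.step (fun a => (a.2.2.1, a.2.2.2)) (t := e3.toFinset.offDiag)
      (by rw [Finset.offDiag_card]; exact Stmt12H.sq_mono (htFk e3 he3))
    · intro a ha
      have he : a.1.2.2 = e3 := (Finset.mem_filter.1 ha).2
      have haS := Finset.mem_of_mem_filter _
        (Finset.mem_of_mem_filter _ (Finset.mem_of_mem_filter _ ha))
      rw [hS] at haS
      obtain ⟨_, _, _, hy3, hz3, hyz, _, _⟩ := (Finset.mem_filter.1 haS).2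
      rw [Finset.mem_offDiag]
      exact ⟨Multiset.mem_toFinset.2 (he ▸ hy3), Multiset.mem_toFinset.2 (he ▸ hz3), hyz⟩
    intro q _
    obtain ⟨p1, p2⟩ := p
    obtain ⟨qa, qb⟩ := q
    apply Stmt12H.card_le_one' ((p1, p2, e3), (v, qa, qb))
    intro a ha
    simp only [Finset.mem_filter] at ha
    obtain ⟨⟨⟨⟨_, q1⟩, q2⟩, q3⟩, q4⟩ := ha
    obtain ⟨⟨x1, x2, x3⟩, y1, y2, y3⟩ := a
    simp only [Prod.mk.injEq] at q1 q2 q3 q4 ⊢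
    tauto
  -- ===== loop / non-loop edge sets =====
  set Fl := F.filter isLoopE with hFldef
  set Fnl := F.filter (fun e => ¬ isLoopE e) with hFnldef
  have hlL : Fl.card ≤ L := by
    have h1 : Fl.card = Multiset.card (G.filter isLoopE) := by
      rw [hFldef, Finset.card_def, Finset.filter_val, hFval]
    omega
  have hFnlFl : Fnl.card + Fl.card = m := by
    have := Finset.card_filter_add_card_filter_not (s := F) (p := isLoopE)
    rw [hFldef, hFnldef]
    rw [hFcard] at this
    omega
  set Dnl : Fin n → Finset (Multiset (Fin n)) :=
    fun w => F.filter (fun e => w ∈ e ∧ ¬ isLoopE e) with hDnldef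
  have hrt : ∀ v : Fin n, (Dnl v).card + (∑ e ∈ Fl, e.count v) = d := by
    intro v
    have hsplit := Finset.sum_filter_add_sum_filter_not F isLoopE (fun e => e.count v)
    have h1 : Dnl v = Fnl.filter (fun e => v ∈ e) := by
      ext e
      rw [hDnldef, hFnldef]
      simp only [Finset.mem_filter, Finset.filter_filter]
      tauto
    have hnl : ∑ e ∈ Fnl, e.count v = (Dnl v).card := by
      rw [h1, Finset.card_filter]
      refine Finset.sum_congr rfl (fun e he => ?_)
      have henl : ¬ isLoopE e := by
        rw [hFnldef] at he; exact (Finset.mem_filter.1 he).2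
      have hle1 : e.count v ≤ 1 := by
        by_contra hw; exact henl ⟨v, by omega⟩
      by_cases hv : v ∈ e
      · rw [if_pos hv]
        have := Multiset.one_le_count_iff_mem.2 hv
        omega
      · rw [if_neg hv]; exact Multiset.count_eq_zero.2 hv
    have hd : ∑ e ∈ F, e.count v = d := by rw [hsumF]; exact hdeg v
    rw [← hFldef, ← hFnldef] at hsplit
    omega
  have hsumt : ∑ v : Fin n, ∑ e ∈ Fl, e.count v = Fl.card * k := by
    rw [Finset.sum_comm]
    have hcongr : ∀ e ∈ Fl, ∑ v : Fin n, e.count v = k := by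
      intro e he
      have heF : e ∈ F := by rw [hFldef] at he; exact Finset.mem_of_mem_filter _ he
      have hcnt : ∑ v ∈ Finset.univ, e.count v = Multiset.card e := by
        rw [← Multiset.toFinset_sum_count_eq e]
        exact (Finset.sum_subset (Finset.subset_univ _)
          (fun x _ hx => Multiset.count_eq_zero.2 (by simpa using hx))).symm
      rw [hcnt, hedge e ((hmemF e).1 heF)]
    rw [Finset.sum_congr rfl hcongr, Finset.sum_const, smul_eq_mul]
  -- ===== P1, P2 =====
  set P1 := ((Finset.univ : Finset (Fin n)) ×ˢ F ×ˢ F).filter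
    (fun p => p.1 ∈ p.2.1 ∧ p.1 ∈ p.2.2 ∧ p.2.1 ≠ p.2.2 ∧
      ¬ isLoopE p.2.1 ∧ ¬ isLoopE p.2.2) with hP1def
  set P2 := (F ×ˢ (Finset.univ : Finset (Fin n)) ×ˢ (Finset.univ : Finset (Fin n))).filter
    (fun q => q.2.1 ∈ q.1 ∧ q.2.2 ∈ q.1 ∧ q.2.1 ≠ q.2.2 ∧ ¬ isLoopE q.1) with hP2def
  have hP1low : n * (d*d - d) ≤ P1.card + 2*d*(Fl.card * k) := by
    have hfib : P1.card = ∑ v : Fin n, (Dnl v).offDiag.card := by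
      rw [Finset.card_eq_sum_card_fiberwise (f := fun p => p.1)
        (t := Finset.univ) (fun x _ => Finset.mem_univ _)]
      refine Finset.sum_congr rfl (fun v _ => ?_)
      apply Finset.card_nbij' (fun p => (p.2.1, p.2.2)) (fun q => (v, q.1, q.2))
      · intro p hp
        obtain ⟨hpP1, hpv⟩ := Finset.mem_filter.1 hp
        rw [hP1def] at hpP1
        obtain ⟨hmem, hc⟩ := Finset.mem_filter.1 hpP1
        simp only [Finset.mem_product, Finset.mem_univ, true_and] at hmem
        rw [Finset.mem_coe, Finset.mem_offDiag, hDnldef]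
        refine ⟨Finset.mem_filter.2 ⟨hmem.1, hpv ▸ hc.1, hc.2.2.2.1⟩,
          Finset.mem_filter.2 ⟨hmem.2, hpv ▸ hc.2.1, hc.2.2.2.2⟩, hc.2.2.1⟩
      · intro q hq
        rw [Finset.mem_coe, Finset.mem_offDiag, hDnldef] at hq
        obtain ⟨hq1, hq2, hqne⟩ := hq
        obtain ⟨hq1F, hq1v, hq1l⟩ := Finset.mem_filter.1 hq1
        obtain ⟨hq2F, hq2v, hq2l⟩ := Finset.mem_filter.1 hq2
        refine Finset.mem_filter.2 ⟨?_, rfl⟩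
        rw [hP1def]
        refine Finset.mem_filter.2 ⟨?_, hq1v, hq2v, hqne, hq1l, hq2l⟩
        simp only [Finset.mem_product, Finset.mem_univ, true_and]
        exact ⟨hq1F, hq2F⟩
      · intro p hp
        obtain ⟨_, hpv⟩ := Finset.mem_filter.1 hp
        rw [← hpv]
      · intro q _
        rfl
    have hpt : ∀ v : Fin n,
        d*d - d ≤ (Dnl v).offDiag.card + 2*d*(∑ e ∈ Fl, e.count v) := by
      intro v
      rw [Finset.offDiag_card]
      exact Stmt12H.nat_key _ _ _ (hrt v)
    calc n * (d*d - d) = ∑ _v : Fin n, (d*d - d) := by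
          rw [Finset.sum_const, Finset.card_univ, Fintype.card_fin, smul_eq_mul]
      _ ≤ ∑ v : Fin n, ((Dnl v).offDiag.card + 2*d*(∑ e ∈ Fl, e.count v)) :=
          Finset.sum_le_sum (fun v _ => hpt v)
      _ = (∑ v : Fin n, (Dnl v).offDiag.card) + 2*d*(∑ v : Fin n, ∑ e ∈ Fl, e.count v) := by
          rw [Finset.sum_add_distrib, Finset.mul_sum]
      _ = P1.card + 2*d*(Fl.card * k) := by rw [hfib, hsumt]
  have hP2card : P2.card = Fnl.card * (k*k - k) := by
    rw [Finset.card_eq_sum_card_fiberwise (f := fun q => q.1) (t := Fnl) ?hmap]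
    case hmap =>
      intro q hq
      rw [hP2def] at hq
      obtain ⟨hmem, hc⟩ := Finset.mem_filter.1 hq
      simp only [Finset.mem_product, Finset.mem_univ, and_true] at hmem
      rw [hFnldef]
      exact Finset.mem_filter.2 ⟨hmem, hc.2.2.2⟩
    have hcongr : ∀ e3 ∈ Fnl, (P2.filter (fun q => q.1 = e3)).card = k*k - k := by
      intro e3 he3
      have he3F : e3 ∈ F := by rw [hFnldef] at he3; exact Finset.mem_of_mem_filter _ he3
      have he3nl : ¬ isLoopE e3 := by rw [hFnldef] at he3; exact (Finset.mem_filter.1 he3).2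
      have hnd : e3.Nodup := Multiset.nodup_iff_count_le_one.2 (fun w => by
        by_contra hw; exact he3nl ⟨w, by omega⟩)
      have htf : e3.toFinset.card = k := by
        rw [Multiset.toFinset_card_of_nodup hnd, hedge e3 ((hmemF e3).1 he3F)]
      have hbij : (P2.filter (fun q => q.1 = e3)).card = e3.toFinset.offDiag.card := by
        apply Finset.card_nbij' (fun q => (q.2.1, q.2.2)) (fun r => (e3, r.1, r.2))
        · intro q hq
          obtain ⟨hqP2, hqe⟩ := Finset.mem_filter.1 hq
          rw [hP2def] at hqP2
          obtain ⟨_, hc⟩ := Finset.mem_filter.1 hqP2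
          rw [Finset.mem_coe, Finset.mem_offDiag]
          exact ⟨Multiset.mem_toFinset.2 (hqe ▸ hc.1),
            Multiset.mem_toFinset.2 (hqe ▸ hc.2.1), hc.2.2.1⟩
        · intro r hr
          rw [Finset.mem_coe, Finset.mem_offDiag] at hr
          obtain ⟨hr1, hr2, hrne⟩ := hr
          refine Finset.mem_filter.2 ⟨?_, rfl⟩
          rw [hP2def]
          refine Finset.mem_filter.2 ⟨?_, Multiset.mem_toFinset.1 hr1,
            Multiset.mem_toFinset.1 hr2, hrne, he3nl⟩
          simp only [Finset.mem_product, Finset.mem_univ, and_true]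
          exact he3F
        · intro q hq
          obtain ⟨_, hqe⟩ := Finset.mem_filter.1 hq
          rw [← hqe]
        · intro r _
          rfl
      rw [hbij, Finset.offDiag_card, htf]
    rw [Finset.sum_congr rfl hcongr, Finset.sum_const, smul_eq_mul]
  -- ===== T' =====
  set T' := U.filter (fun a => a.2.1 ∈ a.1.1 ∧ a.2.1 ∈ a.1.2.1 ∧ a.1.1 ≠ a.1.2.1 ∧
      a.2.2.1 ∈ a.1.2.2 ∧ a.2.2.2 ∈ a.1.2.2 ∧ a.2.2.1 ≠ a.2.2.2 ∧
      ¬ isLoopE a.1.1 ∧ ¬ isLoopE a.1.2.1 ∧ ¬ isLoopE a.1.2.2) with hT'def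
  have hT'info : ∀ a, a ∈ T' →
      (a.1.1 ∈ F ∧ a.1.2.1 ∈ F ∧ a.1.2.2 ∈ F) ∧
      (a.2.1 ∈ a.1.1 ∧ a.2.1 ∈ a.1.2.1 ∧ a.1.1 ≠ a.1.2.1 ∧
       a.2.2.1 ∈ a.1.2.2 ∧ a.2.2.2 ∈ a.1.2.2 ∧ a.2.2.1 ≠ a.2.2.2 ∧
       ¬ isLoopE a.1.1 ∧ ¬ isLoopE a.1.2.1 ∧ ¬ isLoopE a.1.2.2) := by
    intro a ha
    rw [hT'def] at ha
    obtain ⟨hU, hc⟩ := Finset.mem_filter.1 ha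
    exact ⟨hUmem a hU, hc⟩
  have hT'lb : P1.card * P2.card ≤ T'.card := by
    rw [← Finset.card_product]
    apply Finset.card_le_card_of_injOn
      (fun pq => ((pq.1.2.1, pq.1.2.2, pq.2.1), (pq.1.1, pq.2.2.1, pq.2.2.2)))
    · intro pq hpq
      obtain ⟨hp, hq⟩ := Finset.mem_product.1 hpq
      rw [hP1def] at hp
      rw [hP2def] at hq
      obtain ⟨hpm, hpc⟩ := Finset.mem_filter.1 hp
      obtain ⟨hqm, hqc⟩ := Finset.mem_filter.1 hq
      simp only [Finset.mem_product, Finset.mem_univ, true_and, and_true] at hpm hqm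
      rw [hT'def]
      refine Finset.mem_filter.2 ⟨?_, ?_⟩
      · rw [hUdef]
        simp only [Finset.mem_product, Finset.mem_univ, and_true]
        exact ⟨hpm.1, hpm.2, hqm⟩
      · exact ⟨hpc.1, hpc.2.1, hpc.2.2.1, hqc.1, hqc.2.1, hqc.2.2.1,
          hpc.2.2.2.1, hpc.2.2.2.2, hqc.2.2.2⟩
    · intro x _ y _ hxy
      simp only [Prod.mk.injEq] at hxy
      obtain ⟨⟨e1x, e2x, e3x⟩, vx, yx, zx⟩ := x
      obtain ⟨⟨e1y, e2y, e3y⟩, vy, yy, zy⟩ := y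
      simp only [Prod.mk.injEq] at hxy ⊢
      tauto
    -- ===== Good and bad sets =====
  set Good := T'.filter (fun a =>
      (∀ w ∈ a.1.2.2, w ∉ a.1.1 ∧ w ∉ a.1.2.1) ∧
      (a.2.2.1 ::ₘ a.1.1.erase a.2.1) ∉ G ∧
      (a.2.2.2 ::ₘ a.1.2.1.erase a.2.1) ∉ G ∧
      (a.2.1 ::ₘ a.2.1 ::ₘ (a.1.2.2.erase a.2.2.1).erase a.2.2.2) ∉ G) with hGooddef
  set BD := T'.filter (fun a => ¬ (∀ w ∈ a.1.2.2, w ∉ a.1.1 ∧ w ∉ a.1.2.1)) with hBDdef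
  set BE1 := T'.filter (fun a => (a.2.2.1 ::ₘ a.1.1.erase a.2.1) ∈ G) with hBE1def
  set BE2 := T'.filter (fun a => (a.2.2.2 ::ₘ a.1.2.1.erase a.2.1) ∈ G) with hBE2def
  set BF := T'.filter (fun a =>
      (a.2.1 ::ₘ a.2.1 ::ₘ (a.1.2.2.erase a.2.2.1).erase a.2.2.2) ∈ G) with hBFdef
  have hGoodS : Good ⊆ bwdSwitchSet n G := by
    intro a ha
    rw [hGooddef] at ha
    obtain ⟨haT, hg⟩ := Finset.mem_filter.1 ha
    obtain ⟨⟨hf1, hf2, hf3⟩, hv1, hv2, h12, hy3, hz3, hyz, hl1, hl2, hl3⟩ := hT'info a haT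
    rw [hT'def] at haT
    rw [hS]
    refine Finset.mem_filter.2 ⟨(Finset.mem_filter.1 haT).1, ?_⟩
    exact Stmt12H.good_ok G hnomult _ _ _ _ _ _ ((hmemF _).1 hf1) ((hmemF _).1 hf2)
      ((hmemF _).1 hf3) h12 hv1 hv2 hy3 hz3 hyz hl1 hl2 hl3 hg.1 hg.2.1 hg.2.2.1 hg.2.2.2
  have hcover : T' ⊆ Good ∪ (BD ∪ (BE1 ∪ (BE2 ∪ BF))) := by
    intro a ha
    simp only [Finset.mem_union]
    by_cases c1 : ∀ w ∈ a.1.2.2, w ∉ a.1.1 ∧ w ∉ a.1.2.1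
    · by_cases c2 : (a.2.2.1 ::ₘ a.1.1.erase a.2.1) ∈ G
      · exact Or.inr (Or.inr (Or.inl (by rw [hBE1def]; exact Finset.mem_filter.2 ⟨ha, c2⟩)))
      by_cases c3 : (a.2.2.2 ::ₘ a.1.2.1.erase a.2.1) ∈ G
      · exact Or.inr (Or.inr (Or.inr (Or.inl (by
          rw [hBE2def]; exact Finset.mem_filter.2 ⟨ha, c3⟩))))
      by_cases c4 : (a.2.1 ::ₘ a.2.1 ::ₘ (a.1.2.2.erase a.2.2.1).erase a.2.2.2) ∈ G
      · exact Or.inr (Or.inr (Or.inr (Or.inr (by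
          rw [hBFdef]; exact Finset.mem_filter.2 ⟨ha, c4⟩))))
      · exact Or.inl (by rw [hGooddef]; exact Finset.mem_filter.2 ⟨ha, c1, c2, c3, c4⟩)
    · exact Or.inr (Or.inl (by rw [hBDdef]; exact Finset.mem_filter.2 ⟨ha, c1⟩))
  -- ===== bad set cardinality bounds =====
  have hBd1 : ∀ w : Fin n,
      (T'.filter (fun a => w ∈ a.1.2.2 ∧ w ∈ a.1.1)).card
        ≤ d * (k * (d * (d * (k * (k * 1))))) := by
    intro w
    apply Stmt12H.step (fun a => a.1.1) (t := D w) (hDcard w)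
    · intro a ha
      obtain ⟨haT, _, hw1⟩ := Finset.mem_filter.1 ha
      exact (hDmem w a.1.1).2 ⟨(hT'info a haT).1.1, hw1⟩
    intro b1 hb1
    apply Stmt12H.step (fun a => a.2.1) (t := b1.toFinset) (htFk b1 ((hDmem w b1).1 hb1).1)
    · intro a ha
      have he : a.1.1 = b1 := (Finset.mem_filter.1 ha).2
      have haT : a ∈ T' := Finset.mem_of_mem_filter _ (Finset.mem_of_mem_filter _ ha)
      exact Multiset.mem_toFinset.2 (he ▸ (hT'info a haT).2.1)
    intro v0 _
    apply Stmt12H.step (fun a => a.1.2.1) (t := D v0) (hDcard v0)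
    · intro a ha
      have hv : a.2.1 = v0 := (Finset.mem_filter.1 ha).2
      have haT : a ∈ T' := Finset.mem_of_mem_filter _ (Finset.mem_of_mem_filter _
        (Finset.mem_of_mem_filter _ ha))
      exact (hDmem v0 a.1.2.1).2 ⟨(hT'info a haT).1.2.1, hv ▸ (hT'info a haT).2.2.1⟩
    intro b2 _
    apply Stmt12H.step (fun a => a.1.2.2) (t := D w) (hDcard w)
    · intro a ha
      have haB := Finset.mem_of_mem_filter _ (Finset.mem_of_mem_filter _
        (Finset.mem_of_mem_filter _ ha))
      obtain ⟨haT, hw3, _⟩ := Finset.mem_filter.1 haB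
      exact (hDmem w a.1.2.2).2 ⟨(hT'info a haT).1.2.2, hw3⟩
    intro b3 hb3
    apply Stmt12H.step (fun a => a.2.2.1) (t := b3.toFinset) (htFk b3 ((hDmem w b3).1 hb3).1)
    · intro a ha
      have he3 : a.1.2.2 = b3 := (Finset.mem_filter.1 ha).2
      have haT : a ∈ T' := Finset.mem_of_mem_filter _ (Finset.mem_of_mem_filter _
        (Finset.mem_of_mem_filter _ (Finset.mem_of_mem_filter _
        (Finset.mem_of_mem_filter _ ha))))
      exact Multiset.mem_toFinset.2 (he3 ▸ (hT'info a haT).2.2.2.2.1)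
    intro y0 _
    apply Stmt12H.step (fun a => a.2.2.2) (t := b3.toFinset) (htFk b3 ((hDmem w b3).1 hb3).1)
    · intro a ha
      have he3 : a.1.2.2 = b3 := (Finset.mem_filter.1 (Finset.mem_of_mem_filter _ ha)).2
      have haT : a ∈ T' := Finset.mem_of_mem_filter _ (Finset.mem_of_mem_filter _
        (Finset.mem_of_mem_filter _ (Finset.mem_of_mem_filter _ (Finset.mem_of_mem_filter _
        (Finset.mem_of_mem_filter _ ha)))))
      exact Multiset.mem_toFinset.2 (he3 ▸ (hT'info a haT).2.2.2.2.2.1)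
    intro z0 _
    apply Stmt12H.card_le_one' ((b1, b2, b3), (v0, y0, z0))
    intro a ha
    obtain ⟨⟨x1, x2, x3⟩, y1, y2, y3⟩ := a
    simp only [Finset.mem_filter, Prod.mk.injEq] at ha
    simp only [Prod.mk.injEq]
    tauto
  have hBd2 : ∀ w : Fin n,
      (T'.filter (fun a => w ∈ a.1.2.2 ∧ w ∈ a.1.2.1)).card
        ≤ d * (k * (d * (d * (k * (k * 1))))) := by
    intro w
    apply Stmt12H.step (fun a => a.1.2.1) (t := D w) (hDcard w)
    · intro a ha
      obtain ⟨haT, _, hw1⟩ := Finset.mem_filter.1 ha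
      exact (hDmem w a.1.2.1).2 ⟨(hT'info a haT).1.2.1, hw1⟩
    intro b2 hb2
    apply Stmt12H.step (fun a => a.2.1) (t := b2.toFinset) (htFk b2 ((hDmem w b2).1 hb2).1)
    · intro a ha
      have he : a.1.2.1 = b2 := (Finset.mem_filter.1 ha).2
      have haT : a ∈ T' := Finset.mem_of_mem_filter _ (Finset.mem_of_mem_filter _ ha)
      exact Multiset.mem_toFinset.2 (he ▸ (hT'info a haT).2.2.1)
    intro v0 _
    apply Stmt12H.step (fun a => a.1.1) (t := D v0) (hDcard v0)
    · intro a ha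
      have hv : a.2.1 = v0 := (Finset.mem_filter.1 ha).2
      have haT : a ∈ T' := Finset.mem_of_mem_filter _ (Finset.mem_of_mem_filter _
        (Finset.mem_of_mem_filter _ ha))
      exact (hDmem v0 a.1.1).2 ⟨(hT'info a haT).1.1, hv ▸ (hT'info a haT).2.1⟩
    intro b1 _
    apply Stmt12H.step (fun a => a.1.2.2) (t := D w) (hDcard w)
    · intro a ha
      have haB := Finset.mem_of_mem_filter _ (Finset.mem_of_mem_filter _
        (Finset.mem_of_mem_filter _ ha))
      obtain ⟨haT, hw3, _⟩ := Finset.mem_filter.1 haB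
      exact (hDmem w a.1.2.2).2 ⟨(hT'info a haT).1.2.2, hw3⟩
    intro b3 hb3
    apply Stmt12H.step (fun a => a.2.2.1) (t := b3.toFinset) (htFk b3 ((hDmem w b3).1 hb3).1)
    · intro a ha
      have he3 : a.1.2.2 = b3 := (Finset.mem_filter.1 ha).2
      have haT : a ∈ T' := Finset.mem_of_mem_filter _ (Finset.mem_of_mem_filter _
        (Finset.mem_of_mem_filter _ (Finset.mem_of_mem_filter _
        (Finset.mem_of_mem_filter _ ha))))
      exact Multiset.mem_toFinset.2 (he3 ▸ (hT'info a haT).2.2.2.2.1)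
    intro y0 _
    apply Stmt12H.step (fun a => a.2.2.2) (t := b3.toFinset) (htFk b3 ((hDmem w b3).1 hb3).1)
    · intro a ha
      have he3 : a.1.2.2 = b3 := (Finset.mem_filter.1 (Finset.mem_of_mem_filter _ ha)).2
      have haT : a ∈ T' := Finset.mem_of_mem_filter _ (Finset.mem_of_mem_filter _
        (Finset.mem_of_mem_filter _ (Finset.mem_of_mem_filter _ (Finset.mem_of_mem_filter _
        (Finset.mem_of_mem_filter _ ha)))))
      exact Multiset.mem_toFinset.2 (he3 ▸ (hT'info a haT).2.2.2.2.2.1)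
    intro z0 _
    apply Stmt12H.card_le_one' ((b1, b2, b3), (v0, y0, z0))
    intro a ha
    obtain ⟨⟨x1, x2, x3⟩, y1, y2, y3⟩ := a
    simp only [Finset.mem_filter, Prod.mk.injEq] at ha
    simp only [Prod.mk.injEq]
    tauto
  have hBDcard : BD.card ≤ n * (2 * (d * (k * (d * (d * (k * (k * 1))))))) := by
    have hsub : BD ⊆ Finset.univ.biUnion (fun w =>
        (T'.filter (fun a => w ∈ a.1.2.2 ∧ w ∈ a.1.1)) ∪
        (T'.filter (fun a => w ∈ a.1.2.2 ∧ w ∈ a.1.2.1))) := by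
      intro a ha
      rw [hBDdef] at ha
      obtain ⟨haT, hcnd⟩ := Finset.mem_filter.1 ha
      push_neg at hcnd
      obtain ⟨w, hw3, hw⟩ := hcnd
      rw [Finset.mem_biUnion]
      refine ⟨w, Finset.mem_univ _, ?_⟩
      rw [Finset.mem_union]
      by_cases hw1 : w ∈ a.1.1
      · exact Or.inl (Finset.mem_filter.2 ⟨haT, hw3, hw1⟩)
      · exact Or.inr (Finset.mem_filter.2 ⟨haT, hw3, hw hw1⟩)
    calc BD.card ≤ _ := Finset.card_le_card hsub
      _ ≤ ∑ w : Fin n, ((T'.filter (fun a => w ∈ a.1.2.2 ∧ w ∈ a.1.1)) ∪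
            (T'.filter (fun a => w ∈ a.1.2.2 ∧ w ∈ a.1.2.1))).card := Finset.card_biUnion_le
      _ ≤ ∑ _w : Fin n, (2 * (d * (k * (d * (d * (k * (k * 1))))))) := by
          refine Finset.sum_le_sum (fun w _ => ?_)
          have h1 := hBd1 w
          have h2 := hBd2 w
          have h3 := Finset.card_union_le (T'.filter (fun a => w ∈ a.1.2.2 ∧ w ∈ a.1.1))
            (T'.filter (fun a => w ∈ a.1.2.2 ∧ w ∈ a.1.2.1))
          omega
      _ = n * (2 * (d * (k * (d * (d * (k * (k * 1))))))) := by
          rw [Finset.sum_const, Finset.card_univ, Fintype.card_fin, smul_eq_mul]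
  have hBE1card : BE1.card ≤ n * (d * (d * (d * (k * (d * (k * 1)))))) := by
    rw [hBE1def]
    apply Stmt12H.step (fun a => a.2.1) (t := (Finset.univ : Finset (Fin n))) (by simp)
    · intro a _; exact Finset.mem_univ _
    intro v0 _
    apply Stmt12H.step (fun a => a.1.1) (t := D v0) (hDcard v0)
    · intro a ha
      have hv : a.2.1 = v0 := (Finset.mem_filter.1 ha).2
      have haT : a ∈ T' := Finset.mem_of_mem_filter _ (Finset.mem_of_mem_filter _ ha)
      exact (hDmem v0 a.1.1).2 ⟨(hT'info a haT).1.1, hv ▸ (hT'info a haT).2.1⟩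
    intro b1 hb1
    apply Stmt12H.step (fun a => a.1.2.1) (t := D v0) (hDcard v0)
    · intro a ha
      have hv : a.2.1 = v0 := (Finset.mem_filter.1 (Finset.mem_of_mem_filter _ ha)).2
      have haT : a ∈ T' := Finset.mem_of_mem_filter _ (Finset.mem_of_mem_filter _
        (Finset.mem_of_mem_filter _ ha))
      exact (hDmem v0 a.1.2.1).2 ⟨(hT'info a haT).1.2.1, hv ▸ (hT'info a haT).2.2.1⟩
    intro b2 _
    have hb1F : b1 ∈ F := ((hDmem v0 b1).1 hb1).1
    have hv0b1 : v0 ∈ b1 := ((hDmem v0 b1).1 hb1).2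
    have hcb1 : Multiset.card b1 = k := hedge b1 ((hmemF b1).1 hb1F)
    have hpos : 0 < Multiset.card (b1.erase v0) := by
      rw [Multiset.card_erase_of_mem hv0b1, hcb1, Nat.pred_eq_sub_one]; omega
    obtain ⟨w0, hw0⟩ := Multiset.card_pos_iff_exists_mem.1 hpos
    apply Stmt12H.step (fun a => a.2.2.1 ::ₘ a.1.1.erase a.2.1) (t := D w0) (hDcard w0)
    · intro a ha
      have hb : a.1.1 = b1 := (Finset.mem_filter.1 (Finset.mem_of_mem_filter _ ha)).2
      have hv : a.2.1 = v0 := (Finset.mem_filter.1 (Finset.mem_of_mem_filter _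
        (Finset.mem_of_mem_filter _ ha))).2
      have hcond : (a.2.2.1 ::ₘ a.1.1.erase a.2.1) ∈ G :=
        (Finset.mem_filter.1 (Finset.mem_of_mem_filter _ (Finset.mem_of_mem_filter _
          (Finset.mem_of_mem_filter _ ha)))).2
      refine (hDmem w0 _).2 ⟨(hmemF _).2 hcond, ?_⟩
      apply Multiset.mem_cons_of_mem
      rw [hb, hv]
      exact hw0
    intro g0 hg0
    apply Stmt12H.step (fun a => a.2.2.1) (t := g0.toFinset) (htFk g0 ((hDmem w0 g0).1 hg0).1)
    · intro a ha
      have hg : a.2.2.1 ::ₘ a.1.1.erase a.2.1 = g0 := (Finset.mem_filter.1 ha).2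
      exact Multiset.mem_toFinset.2 (hg ▸ Multiset.mem_cons_self _ _)
    intro y0 _
    apply Stmt12H.step (fun a => a.1.2.2) (t := D y0) (hDcard y0)
    · intro a ha
      have hy : a.2.2.1 = y0 := (Finset.mem_filter.1 ha).2
      have haT : a ∈ T' := Finset.mem_of_mem_filter _ (Finset.mem_of_mem_filter _
        (Finset.mem_of_mem_filter _ (Finset.mem_of_mem_filter _
        (Finset.mem_of_mem_filter _ (Finset.mem_of_mem_filter _ ha)))))
      exact (hDmem y0 a.1.2.2).2 ⟨(hT'info a haT).1.2.2, hy ▸ (hT'info a haT).2.2.2.2.1⟩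
    intro b3 hb3
    apply Stmt12H.step (fun a => a.2.2.2) (t := b3.toFinset) (htFk b3 ((hDmem y0 b3).1 hb3).1)
    · intro a ha
      have he3 : a.1.2.2 = b3 := (Finset.mem_filter.1 ha).2
      have haT : a ∈ T' := Finset.mem_of_mem_filter _ (Finset.mem_of_mem_filter _
        (Finset.mem_of_mem_filter _ (Finset.mem_of_mem_filter _ (Finset.mem_of_mem_filter _
        (Finset.mem_of_mem_filter _ (Finset.mem_of_mem_filter _ ha))))))
      exact Multiset.mem_toFinset.2 (he3 ▸ (hT'info a haT).2.2.2.2.2.1)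
    intro z0 _
    apply Stmt12H.card_le_one' ((b1, b2, b3), (v0, y0, z0))
    intro a ha
    obtain ⟨⟨x1, x2, x3⟩, y1, y2, y3⟩ := a
    simp only [Finset.mem_filter, Prod.mk.injEq] at ha
    simp only [Prod.mk.injEq]
    tauto
  have hBE2card : BE2.card ≤ n * (d * (d * (d * (k * (d * (k * 1)))))) := by
    rw [hBE2def]
    apply Stmt12H.step (fun a => a.2.1) (t := (Finset.univ : Finset (Fin n))) (by simp)
    · intro a _; exact Finset.mem_univ _
    intro v0 _
    apply Stmt12H.step (fun a => a.1.2.1) (t := D v0) (hDcard v0)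
    · intro a ha
      have hv : a.2.1 = v0 := (Finset.mem_filter.1 ha).2
      have haT : a ∈ T' := Finset.mem_of_mem_filter _ (Finset.mem_of_mem_filter _ ha)
      exact (hDmem v0 a.1.2.1).2 ⟨(hT'info a haT).1.2.1, hv ▸ (hT'info a haT).2.2.1⟩
    intro b2 hb2
    apply Stmt12H.step (fun a => a.1.1) (t := D v0) (hDcard v0)
    · intro a ha
      have hv : a.2.1 = v0 := (Finset.mem_filter.1 (Finset.mem_of_mem_filter _ ha)).2
      have haT : a ∈ T' := Finset.mem_of_mem_filter _ (Finset.mem_of_mem_filter _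
        (Finset.mem_of_mem_filter _ ha))
      exact (hDmem v0 a.1.1).2 ⟨(hT'info a haT).1.1, hv ▸ (hT'info a haT).2.1⟩
    intro b1 _
    have hb2F : b2 ∈ F := ((hDmem v0 b2).1 hb2).1
    have hv0b2 : v0 ∈ b2 := ((hDmem v0 b2).1 hb2).2
    have hcb2 : Multiset.card b2 = k := hedge b2 ((hmemF b2).1 hb2F)
    have hpos : 0 < Multiset.card (b2.erase v0) := by
      rw [Multiset.card_erase_of_mem hv0b2, hcb2, Nat.pred_eq_sub_one]; omega
    obtain ⟨w0, hw0⟩ := Multiset.card_pos_iff_exists_mem.1 hpos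
    apply Stmt12H.step (fun a => a.2.2.2 ::ₘ a.1.2.1.erase a.2.1) (t := D w0) (hDcard w0)
    · intro a ha
      have hb : a.1.2.1 = b2 := (Finset.mem_filter.1 (Finset.mem_of_mem_filter _ ha)).2
      have hv : a.2.1 = v0 := (Finset.mem_filter.1 (Finset.mem_of_mem_filter _
        (Finset.mem_of_mem_filter _ ha))).2
      have hcond : (a.2.2.2 ::ₘ a.1.2.1.erase a.2.1) ∈ G :=
        (Finset.mem_filter.1 (Finset.mem_of_mem_filter _ (Finset.mem_of_mem_filter _
          (Finset.mem_of_mem_filter _ ha)))).2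
      refine (hDmem w0 _).2 ⟨(hmemF _).2 hcond, ?_⟩
      apply Multiset.mem_cons_of_mem
      rw [hb, hv]
      exact hw0
    intro g0 hg0
    apply Stmt12H.step (fun a => a.2.2.2) (t := g0.toFinset) (htFk g0 ((hDmem w0 g0).1 hg0).1)
    · intro a ha
      have hg : a.2.2.2 ::ₘ a.1.2.1.erase a.2.1 = g0 := (Finset.mem_filter.1 ha).2
      exact Multiset.mem_toFinset.2 (hg ▸ Multiset.mem_cons_self _ _)
    intro z0 _
    apply Stmt12H.step (fun a => a.1.2.2) (t := D z0) (hDcard z0)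
    · intro a ha
      have hz : a.2.2.2 = z0 := (Finset.mem_filter.1 ha).2
      have haT : a ∈ T' := Finset.mem_of_mem_filter _ (Finset.mem_of_mem_filter _
        (Finset.mem_of_mem_filter _ (Finset.mem_of_mem_filter _
        (Finset.mem_of_mem_filter _ (Finset.mem_of_mem_filter _ ha)))))
      exact (hDmem z0 a.1.2.2).2 ⟨(hT'info a haT).1.2.2, hz ▸ (hT'info a haT).2.2.2.2.2.1⟩
    intro b3 hb3
    apply Stmt12H.step (fun a => a.2.2.1) (t := b3.toFinset) (htFk b3 ((hDmem z0 b3).1 hb3).1)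
    · intro a ha
      have he3 : a.1.2.2 = b3 := (Finset.mem_filter.1 ha).2
      have haT : a ∈ T' := Finset.mem_of_mem_filter _ (Finset.mem_of_mem_filter _
        (Finset.mem_of_mem_filter _ (Finset.mem_of_mem_filter _ (Finset.mem_of_mem_filter _
        (Finset.mem_of_mem_filter _ (Finset.mem_of_mem_filter _ ha))))))
      exact Multiset.mem_toFinset.2 (he3 ▸ (hT'info a haT).2.2.2.2.1)
    intro y0 _
    apply Stmt12H.card_le_one' ((b1, b2, b3), (v0, y0, z0))
    intro a ha
    obtain ⟨⟨x1, x2, x3⟩, y1, y2, y3⟩ := a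
    simp only [Finset.mem_filter, Prod.mk.injEq] at ha
    simp only [Prod.mk.injEq]
    tauto
  have hBFcard : BF.card ≤ m * (k * (k * (d * (k * (d * (d * 1)))))) := by
    rw [hBFdef]
    apply Stmt12H.step (fun a => a.1.2.2) (t := F) hFcard.le
    · intro a ha
      exact (hT'info a (Finset.mem_of_mem_filter _ ha)).1.2.2
    intro b3 hb3
    apply Stmt12H.step (fun a => a.2.2.1) (t := b3.toFinset) (htFk b3 hb3)
    · intro a ha
      have he3 : a.1.2.2 = b3 := (Finset.mem_filter.1 ha).2
      have haT : a ∈ T' := Finset.mem_of_mem_filter _ (Finset.mem_of_mem_filter _ ha)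
      exact Multiset.mem_toFinset.2 (he3 ▸ (hT'info a haT).2.2.2.2.1)
    intro y0 _
    apply Stmt12H.step (fun a => a.2.2.2) (t := b3.toFinset) (htFk b3 hb3)
    · intro a ha
      have he3 : a.1.2.2 = b3 := (Finset.mem_filter.1 (Finset.mem_of_mem_filter _ ha)).2
      have haT : a ∈ T' := Finset.mem_of_mem_filter _ (Finset.mem_of_mem_filter _
        (Finset.mem_of_mem_filter _ ha))
      exact Multiset.mem_toFinset.2 (he3 ▸ (hT'info a haT).2.2.2.2.2.1)
    intro z0 _
    have hcb3 : Multiset.card b3 = k := hedge b3 ((hmemF b3).1 hb3)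
    have hpos : 0 < Multiset.card ((b3.erase y0).erase z0) := by
      have h1 := Stmt12H.card_erase_ge (b3.erase y0) z0
      have h2 := Stmt12H.card_erase_ge b3 y0
      omega
    obtain ⟨w0, hw0⟩ := Multiset.card_pos_iff_exists_mem.1 hpos
    apply Stmt12H.step
      (fun a => a.2.1 ::ₘ a.2.1 ::ₘ (a.1.2.2.erase a.2.2.1).erase a.2.2.2)
      (t := D w0) (hDcard w0)
    · intro a ha
      have he3 : a.1.2.2 = b3 := (Finset.mem_filter.1 (Finset.mem_of_mem_filter _
        (Finset.mem_of_mem_filter _ ha))).2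
      have hy : a.2.2.1 = y0 := (Finset.mem_filter.1 (Finset.mem_of_mem_filter _ ha)).2
      have hz : a.2.2.2 = z0 := (Finset.mem_filter.1 ha).2
      have hcond : (a.2.1 ::ₘ a.2.1 ::ₘ (a.1.2.2.erase a.2.2.1).erase a.2.2.2) ∈ G :=
        (Finset.mem_filter.1 (Finset.mem_of_mem_filter _ (Finset.mem_of_mem_filter _
          (Finset.mem_of_mem_filter _ ha)))).2
      refine (hDmem w0 _).2 ⟨(hmemF _).2 hcond, ?_⟩
      apply Multiset.mem_cons_of_mem
      apply Multiset.mem_cons_of_mem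
      rw [he3, hy, hz]
      exact hw0
    intro g0 hg0
    apply Stmt12H.step (fun a => a.2.1) (t := g0.toFinset) (htFk g0 ((hDmem w0 g0).1 hg0).1)
    · intro a ha
      have hg : a.2.1 ::ₘ a.2.1 ::ₘ (a.1.2.2.erase a.2.2.1).erase a.2.2.2 = g0 :=
        (Finset.mem_filter.1 ha).2
      exact Multiset.mem_toFinset.2 (hg ▸ Multiset.mem_cons_self _ _)
    intro v0 _
    apply Stmt12H.step (fun a => a.1.1) (t := D v0) (hDcard v0)
    · intro a ha
      have hv : a.2.1 = v0 := (Finset.mem_filter.1 ha).2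
      have haT : a ∈ T' := Finset.mem_of_mem_filter _ (Finset.mem_of_mem_filter _
        (Finset.mem_of_mem_filter _ (Finset.mem_of_mem_filter _ (Finset.mem_of_mem_filter _
        (Finset.mem_of_mem_filter _ ha)))))
      exact (hDmem v0 a.1.1).2 ⟨(hT'info a haT).1.1, hv ▸ (hT'info a haT).2.1⟩
    intro b1 _
    apply Stmt12H.step (fun a => a.1.2.1) (t := D v0) (hDcard v0)
    · intro a ha
      have hv : a.2.1 = v0 := (Finset.mem_filter.1 (Finset.mem_of_mem_filter _ ha)).2
      have haT : a ∈ T' := Finset.mem_of_mem_filter _ (Finset.mem_of_mem_filter _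
        (Finset.mem_of_mem_filter _ (Finset.mem_of_mem_filter _ (Finset.mem_of_mem_filter _
        (Finset.mem_of_mem_filter _ (Finset.mem_of_mem_filter _ ha))))))
      exact (hDmem v0 a.1.2.1).2 ⟨(hT'info a haT).1.2.1, hv ▸ (hT'info a haT).2.2.1⟩
    intro b2 _
    apply Stmt12H.card_le_one' ((b1, b2, b3), (v0, y0, z0))
    intro a ha
    obtain ⟨⟨x1, x2, x3⟩, y1, y2, y3⟩ := a
    simp only [Finset.mem_filter, Prod.mk.injEq] at ha
    simp only [Prod.mk.injEq]
    tauto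
  -- ===== assembling the lower bound =====
  have hSgoodsum : T'.card ≤ (bwdSwitchSet n G).card +
      (BD.card + (BE1.card + (BE2.card + BF.card))) := by
    have u0 := Finset.card_le_card hcover
    have u1 := Finset.card_union_le Good (BD ∪ (BE1 ∪ (BE2 ∪ BF)))
    have u2 := Finset.card_union_le BD (BE1 ∪ (BE2 ∪ BF))
    have u3 := Finset.card_union_le BE1 (BE2 ∪ BF)
    have u4 := Finset.card_union_le BE2 BF
    have u5 := Finset.card_le_card hGoodS
    omega
  have hbadkey : n * (2 * (d * (k * (d * (d * (k * (k * 1))))))) +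
      (n * (d * (d * (d * (k * (d * (k * 1)))))) +
      (n * (d * (d * (d * (k * (d * (k * 1)))))) +
      m * (k * (k * (d * (k * (d * (d * 1)))))))) ≤ (k*k - k) * (2*k^2*n*d^4) := by
    rcases Nat.eq_zero_or_pos d with hd0 | hd1
    · subst hd0; simp
    obtain ⟨j, rfl⟩ : ∃ j, k = j + 3 := ⟨k - 3, by omega⟩
    have hkk : (j+3)*(j+3) - (j+3) = (j+3)*(j+2) := by
      have h : (j+3)*(j+3) = (j+3)*(j+2) + (j+3) := by ring
      rw [h, Nat.add_sub_cancel]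
    rw [hkk]
    have step1 : n * (2 * (d * ((j+3) * (d * (d * ((j+3) * ((j+3) * 1))))))) +
        (n * (d * (d * (d * ((j+3) * (d * ((j+3) * 1)))))) +
        (n * (d * (d * (d * ((j+3) * (d * ((j+3) * 1)))))) +
        m * ((j+3) * ((j+3) * (d * ((j+3) * (d * (d * 1))))))))
        = 2*(j+3)^3*(n*(d*(d*d))) +
          (2*((j+3)^2*(n*(d*(d*(d*d))))) + (j+3)^2*(((j+3)*m)*(d*(d*d)))) := by ring
    rw [step1, ← hm]
    have step2 : (j+3)^2*((n*d)*(d*(d*d))) = (j+3)^2*(n*(d*(d*(d*d)))) := by ring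
    rw [step2]
    have e5a : d*(d*d) ≤ d*(d*(d*d)) := Nat.le_mul_of_pos_left _ hd1
    have e5 : 2*(j+3)^3*(n*(d*(d*d))) ≤ 2*(j+3)^3*(n*(d*(d*(d*d)))) :=
      Nat.mul_le_mul_left _ (Nat.mul_le_mul_left n e5a)
    have e6 : 2*(j+3)^3 + 3*(j+3)^2 ≤ ((j+3)*(j+2))*(2*(j+3)^2) := by
      have h1 : 2*(j+3)^3 + 3*(j+3)^2 = (2*j+9)*(j+3)^2 := by ring
      have h2 : ((j+3)*(j+2))*(2*(j+3)^2) = (2*(j*j)+10*j+12)*(j+3)^2 := by ring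
      rw [h1, h2]
      exact Nat.mul_le_mul_right _ (by omega)
    calc 2*(j+3)^3*(n*(d*(d*d))) +
          (2*((j+3)^2*(n*(d*(d*(d*d))))) + (j+3)^2*(n*(d*(d*(d*d)))))
        ≤ 2*(j+3)^3*(n*(d*(d*(d*d)))) +
          (2*((j+3)^2*(n*(d*(d*(d*d))))) + (j+3)^2*(n*(d*(d*(d*d))))) :=
          Nat.add_le_add_right e5 _
      _ = (2*(j+3)^3 + 3*(j+3)^2) * (n*(d*(d*(d*d)))) := by ring
      _ ≤ (((j+3)*(j+2))*(2*(j+3)^2)) * (n*(d*(d*(d*d)))) := Nat.mul_le_mul_right _ e6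
      _ = ((j+3)*(j+2)) * (2*(j+3)^2*n*d^4) := by ring
  have hbadsum : BD.card + (BE1.card + (BE2.card + BF.card)) ≤ (k*k - k) * (2*k^2*n*d^4) := by
    have h1 := hBDcard
    have h2 := hBE1card
    have h3 := hBE2card
    have h4 := hBFcard
    omega
  have hP2eq : m * (k*k - k) = P2.card + Fl.card * (k*k - k) := by
    calc m * (k*k - k) = (Fnl.card + Fl.card) * (k*k - k) := by rw [hFnlFl]
      _ = Fnl.card * (k*k - k) + Fl.card * (k*k - k) := by ring
      _ = P2.card + Fl.card * (k*k - k) := by rw [hP2card]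
  have hP2le : P2.card ≤ m * (k*k - k) := Nat.le.intro hP2eq.symm
  have hmain : n * (d*d - d) * (m * (k*k - k)) ≤ (bwdSwitchSet n G).card +
      ((k*k - k) * (2*k*L*d*m) + ((k*k - k) * (L*n*(d*d - d)) + (k*k - k)*(2*k^2*n*d^4))) := by
    have c1 : n * (d*d - d) * (m * (k*k - k))
        = n * (d*d - d) * P2.card + n * (d*d - d) * (Fl.card * (k*k - k)) := by
      rw [hP2eq]; ring
    have c2 : n * (d*d - d) * P2.card ≤ (P1.card + 2*d*(Fl.card * k)) * P2.card :=
      Nat.mul_le_mul_right _ hP1low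
    have c3 : (P1.card + 2*d*(Fl.card * k)) * P2.card
        = P1.card * P2.card + 2*d*(Fl.card * k) * P2.card := by ring
    have c4 : 2*d*(Fl.card * k) * P2.card ≤ 2*d*(L*k) * (m * (k*k - k)) :=
      Nat.mul_le_mul (Nat.mul_le_mul_left _ (Nat.mul_le_mul_right _ hlL)) hP2le
    have c5 : n * (d*d - d) * (Fl.card * (k*k - k)) ≤ n * (d*d - d) * (L * (k*k - k)) :=
      Nat.mul_le_mul_left _ (Nat.mul_le_mul_right _ hlL)
    have c6 := hT'lb
    have c7 := hSgoodsum
    have c8 := hbadsum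
    have c9 : 2*d*(L*k) * (m * (k*k - k)) = (k*k - k) * (2*k*L*d*m) := by ring
    have c10 : n * (d*d - d) * (L * (k*k - k)) = (k*k - k) * (L*n*(d*d - d)) := by ring
    omega
  -- ===== conclusion =====
  have hC2 : k*k - k = 2 * k.choose 2 := (Stmt12H.two_choose k).symm
  refine ⟨?_, ?_, ?_⟩
  · have harith : 2 * (k.choose 2 * n * d.descFactorial 2 * m)
        = n * ((d*d - d) * (m * ((k*k - k) * 1))) := by
      rw [Stmt12H.df2, hC2]; ring
    rw [harith]
    exact hub
  · rw [tsub_le_iff_right]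
    have harith2 : 2 * (k.choose 2 * n * d.descFactorial 2 * m)
        = n * (d*d - d) * (m * (k*k - k)) := by
      rw [Stmt12H.df2, hC2]; ring
    have harith3 : 2 * (k.choose 2 * (2 * k * L * d * m + L * n * d.descFactorial 2
          + 2 * k ^ 2 * n * d ^ 4))
        = (k*k - k) * (2*k*L*d*m) + ((k*k - k) * (L*n*(d*d - d)) + (k*k - k)*(2*k^2*n*d^4)) := by
      rw [Stmt12H.df2, hC2]; ring
    rw [harith2, harith3]
    exact hmain
  · have hdd : d ≤ d * d := by nlinarith
    rw [Stmt12H.df2]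
    push_cast [Nat.cast_choose_two, Nat.cast_sub hdd]
    have hmr : (n:ℝ) * d = (k:ℝ) * m := by exact_mod_cast hm
    linear_combination (-((k:ℝ)-1)/2 * ((d:ℝ)*(d:ℝ) - (d:ℝ)) * (n:ℝ)) * hmr
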